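/- Let (Ω, μ) be a probability space and let γ₁, γ₂ : Ω → ℝ be measurable functions that are strictly positive almost everywhere, such that log γ₁, log γ₂, and log(1 + γ₁ + γ₂) are integrable. Then ∫ log(1 + γ₁ + γ₂) dμ ≥ log(1 + exp(∫ log γ₁ dμ) + exp(∫ log γ₂ dμ)). -/

import Mathlib

open Real

lemma ptwise (A B : ℝ) {g1 g2 : ℝ} (h1 : 0 < g1) (h2 : 0 < g2) :
    Real.log (1 + Real.exp A + Real.exp B)
      + (Real.exp A / (1 + Real.exp A + Real.exp B)) * (Real.log g1 - A)
      + (Real.exp B / (1 + Real.exp A + Real.exp B)) * (Real.log g2 - B)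
      ≤ Real.log (1 + g1 + g2) := by
  set a := Real.exp A with ha
  set b := Real.exp B with hb
  have hapos : 0 < a := Real.exp_pos A
  have hbpos : 0 < b := Real.exp_pos B
  set S := 1 + a + b with hS
  set T := 1 + g1 + g2 with hT
  have hSpos : 0 < S := by positivity
  have hTpos : 0 < T := by positivity
  have f1 : Real.log g1 + Real.log S - A - Real.log T ≤ g1 * S / (a * T) - 1 := by
    have := Real.log_le_sub_one_of_pos (show 0 < g1 * S / (a * T) by positivity)
    rw [Real.log_div (by positivity) (by positivity), Real.log_mul (by positivity) (by positivity),
      Real.log_mul (by positivity) (by positivity), ha, Real.log_exp] at this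
    linarith
  have f2 : Real.log g2 + Real.log S - B - Real.log T ≤ g2 * S / (b * T) - 1 := by
    have := Real.log_le_sub_one_of_pos (show 0 < g2 * S / (b * T) by positivity)
    rw [Real.log_div (by positivity) (by positivity), Real.log_mul (by positivity) (by positivity),
      Real.log_mul (by positivity) (by positivity), hb, Real.log_exp] at this
    linarith
  have f3 : Real.log S - Real.log T ≤ S / T - 1 := by
    have := Real.log_le_sub_one_of_pos (show 0 < S / T by positivity)
    rw [Real.log_div (by positivity) (by positivity)] at this
    linarith
  have key : (a / S) * (Real.log g1 - A) + (b / S) * (Real.log g2 - B)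
      + Real.log S - Real.log T ≤ 0 := by
    have e1 := mul_le_mul_of_nonneg_left f1 (le_of_lt (show (0:ℝ) < a / S by positivity))
    have e2 := mul_le_mul_of_nonneg_left f2 (le_of_lt (show (0:ℝ) < b / S by positivity))
    have e3 := mul_le_mul_of_nonneg_left f3 (le_of_lt (show (0:ℝ) < 1 / S by positivity))
    have hsum : (a / S) * (g1 * S / (a * T) - 1) + (b / S) * (g2 * S / (b * T) - 1)
        + (1 / S) * (S / T - 1) = 0 := by
      field_simp
      ring
    have hcoef : a / S + b / S + 1 / S = 1 := by field_simp; ring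
    have hre : (a / S) * (Real.log g1 - A) + (b / S) * (Real.log g2 - B)
        + Real.log S - Real.log T
        = a / S * (Real.log g1 + Real.log S - A - Real.log T)
          + b / S * (Real.log g2 + Real.log S - B - Real.log T)
          + 1 / S * (Real.log S - Real.log T) := by
      linear_combination (Real.log T - Real.log S) * hcoef
    rw [hre]
    linarith [e1, e2, e3]
  linarith

open MeasureTheory

theorem jensen_log_throughput {Ω : Type*} [MeasurableSpace Ω]
    (μ : Measure Ω) [IsProbabilityMeasure μ]
    (γ₁ γ₂ : Ω → ℝ) (hm₁ : Measurable γ₁) (hm₂ : Measurable γ₂)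
    (hpos₁ : ∀ᵐ ω ∂μ, 0 < γ₁ ω) (hpos₂ : ∀ᵐ ω ∂μ, 0 < γ₂ ω)
    (hint₁ : Integrable (fun ω => Real.log (γ₁ ω)) μ)
    (hint₂ : Integrable (fun ω => Real.log (γ₂ ω)) μ)
    (hint₃ : Integrable (fun ω => Real.log (1 + γ₁ ω + γ₂ ω)) μ) :
    ∫ ω, Real.log (1 + γ₁ ω + γ₂ ω) ∂μ ≥
      Real.log (1 + Real.exp (∫ ω, Real.log (γ₁ ω) ∂μ)
        + Real.exp (∫ ω, Real.log (γ₂ ω) ∂μ)) := by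
  set A := ∫ ω, Real.log (γ₁ ω) ∂μ with hA
  set B := ∫ ω, Real.log (γ₂ ω) ∂μ with hB
  set S := 1 + Real.exp A + Real.exp B with hS
  set p := Real.exp A / S with hp
  set q := Real.exp B / S with hq
  set g : Ω → ℝ := fun ω =>
    Real.log S + p * (Real.log (γ₁ ω) - A) + q * (Real.log (γ₂ ω) - B) with hg
  have I1 : Integrable (fun ω => p * (Real.log (γ₁ ω) - A)) μ := by
    exact (hint₁.sub (integrable_const A)).const_mul p
  have I2 : Integrable (fun ω => q * (Real.log (γ₂ ω) - B)) μ := by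
    exact (hint₂.sub (integrable_const B)).const_mul q
  have hgint : Integrable g μ := by
    exact ((integrable_const _).add I1).add I2
  have hae : ∀ᵐ ω ∂μ, g ω ≤ Real.log (1 + γ₁ ω + γ₂ ω) := by
    filter_upwards [hpos₁, hpos₂] with ω h1 h2
    exact ptwise A B h1 h2
  have hle : ∫ ω, g ω ∂μ ≤ ∫ ω, Real.log (1 + γ₁ ω + γ₂ ω) ∂μ :=
    integral_mono_ae hgint hint₃ hae
  have i1 : ∫ ω, p * (Real.log (γ₁ ω) - A) ∂μ = 0 := by
    rw [MeasureTheory.integral_const_mul, integral_sub hint₁ (integrable_const A),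
      integral_const, probReal_univ]
    simp [← hA]
  have i2 : ∫ ω, q * (Real.log (γ₂ ω) - B) ∂μ = 0 := by
    rw [MeasureTheory.integral_const_mul, integral_sub hint₂ (integrable_const B),
      integral_const, probReal_univ]
    simp [← hB]
  have hcalc : ∫ ω, g ω ∂μ = Real.log S := by
    have hsplit : ∫ ω, g ω ∂μ = (∫ _ω, Real.log S ∂μ)
        + ((∫ ω, p * (Real.log (γ₁ ω) - A) ∂μ) + ∫ ω, q * (Real.log (γ₂ ω) - B) ∂μ) := by
      have I12 : Integrable (fun ω => p * (Real.log (γ₁ ω) - A)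
          + q * (Real.log (γ₂ ω) - B)) μ := by exact I1.add I2
      rw [← integral_add I1 I2, ← integral_add (integrable_const _) I12]
      apply integral_congr_ae
      filter_upwards with ω
      simp [hg]
      ring
    rw [hsplit, i1, i2, integral_const, probReal_univ]
    simp
  rw [hcalc] at hle
  exact hle
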